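/- Let U ⊆ ℝ⁵ be open, let θ¹ and θ² be smooth ℂ-valued 1-forms on U, and let ψ be a smooth ℝ-valued 1-form on U, such that at every point x ∈ U the five complex covectors θ¹_x, θ²_x, conj(θ¹_x), conj(θ²_x), ψ_x are linearly independent over ℂ in Hom_ℝ(ℝ⁵, ℂ). Suppose there are smooth functions T₁, T₂ : U → ℂ with dθ¹ = −i·ψ∧θ¹ + conj(θ¹)∧θ² and dθ² = −2i·ψ∧θ² + T₁·θ¹∧conj(θ¹) + T₂·θ¹∧θ². Then the Bianchi-type identities hold: (dT₁ + 2i·T₁·ψ) ∧ θ¹ ∧ conj(θ¹) ∧ θ² = 0 and (dT₂ − 2·conj(T₂)·conj(θ²) − i·T₂·ψ) ∧ θ¹ ∧ conj(θ¹) ∧ θ² = 0; equivalently, dT₁ + 2i·T₁·ψ and dT₂ − 2·conj(T₂)·conj(θ²) − i·T₂·ψ are at each point ℂ-linear combinations of θ¹, conj(θ¹), θ². -/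

import Mathlib

set_option maxHeartbeats 16000000

/-- Pointwise complex conjugate of a ℂ-valued real-linear covector. -/
noncomputable def conjForm {E : Type*} [NormedAddCommGroup E] [NormedSpace ℝ E]
    (α : E →L[ℝ] ℂ) : E →L[ℝ] ℂ :=
  Complex.conjCLE.toContinuousLinearMap.comp α

/-- A real covector regarded as a ℂ-valued covector. -/
noncomputable def realToC {E : Type*} [NormedAddCommGroup E] [NormedSpace ℝ E]
    (φ : E →L[ℝ] ℝ) : E →L[ℝ] ℂ :=
  Complex.ofRealCLM.comp φ

/-- Exterior derivative of a ℂ-valued 1-form (alternatized Fréchet derivative). -/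
noncomputable def extD {E : Type*} [NormedAddCommGroup E] [NormedSpace ℝ E]
    (α : E → E →L[ℝ] ℂ) (x v w : E) : ℂ :=
  fderiv ℝ (fun y => α y w) x v - fderiv ℝ (fun y => α y v) x w

namespace Stmt14Aux

abbrev V : Type := Fin 5 → ℝ
abbrev M : Type := V →L[ℝ] ℂ

@[simp] lemma conjForm_apply (α : M) (v : V) : conjForm α v = (starRingEnd ℂ) (α v) := rfl
@[simp] lemma realToC_apply (φ : V →L[ℝ] ℝ) (v : V) : realToC φ v = ((φ v : ℝ) : ℂ) := rfl

/-- evaluation on the standard basis, as a ℂ-linear equivalence. -/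
noncomputable def evalE : M ≃ₗ[ℂ] (Fin 5 → ℂ) where
  toFun := fun f i => f (Pi.single i 1)
  map_add' := by intro f g; ext i; simp
  map_smul' := by intro c f; ext i; simp
  invFun := fun g => ∑ i, g i • ((Complex.ofRealCLM).comp (ContinuousLinearMap.proj i))
  left_inv := by
    intro f
    ext v
    simp only [ContinuousLinearMap.coe_sum', Finset.sum_apply, ContinuousLinearMap.smul_apply,
      ContinuousLinearMap.comp_apply, ContinuousLinearMap.proj_apply, Complex.ofRealCLM_apply,
      smul_eq_mul]
    have hv : v = ∑ i, v i • (Pi.single i 1 : V) := by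
      rw [pi_eq_sum_univ v]
      congr 1
      ext i j
      simp [Pi.single_apply, eq_comm]
    conv_rhs => rw [hv]
    rw [map_sum]
    congr 1
    ext i
    rw [f.map_smul]
    simp [mul_comm]
  right_inv := by
    intro g
    ext i
    show (∑ j, g j • ((Complex.ofRealCLM).comp (ContinuousLinearMap.proj j))) (Pi.single i 1) = g i
    simp only [ContinuousLinearMap.coe_sum', Finset.sum_apply, ContinuousLinearMap.smul_apply,
      ContinuousLinearMap.comp_apply, ContinuousLinearMap.proj_apply, Complex.ofRealCLM_apply,
      smul_eq_mul]
    rw [Finset.sum_eq_single i]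
    · simp
    · intro b _ hb; simp [Pi.single_apply, hb]
    · simp

instance : FiniteDimensional ℂ M := Module.Finite.equiv evalE.symm

lemma finrankM : Module.finrank ℂ M = 5 := by
  rw [evalE.finrank_eq, Module.finrank_fin_fun]

lemma extract1 (fam : Fin 5 → M) (hind : LinearIndependent ℂ fam) (c : Fin 5 → ℂ)
    (h : ∀ u : V, ∑ i, c i * fam i u = 0) : ∀ i, c i = 0 := by
  apply Fintype.linearIndependent_iff.mp hind
  ext u
  simpa [ContinuousLinearMap.smul_apply, smul_eq_mul] using h u

lemma extract2 (fam : Fin 5 → M) (hind : LinearIndependent ℂ fam) (c : Fin 5 → Fin 5 → ℂ)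
    (h : ∀ u v : V, ∑ i, ∑ j, c i j * fam i u * fam j v = 0) : ∀ i j, c i j = 0 := by
  have h1 : ∀ (v : V) (i : Fin 5), ∑ j, c i j * fam j v = 0 := by
    intro v
    apply extract1 fam hind
    intro u
    rw [← h u v]
    refine Finset.sum_congr rfl fun i _ => ?_
    rw [Finset.sum_mul]
    refine Finset.sum_congr rfl fun j _ => ?_
    ring
  intro i
  apply extract1 fam hind
  intro v
  exact h1 v i

lemma extract3 (fam : Fin 5 → M) (hind : LinearIndependent ℂ fam) (c : Fin 5 → Fin 5 → Fin 5 → ℂ)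
    (h : ∀ u v w : V, ∑ i, ∑ j, ∑ k, c i j k * fam i u * fam j v * fam k w = 0) :
    ∀ i j k, c i j k = 0 := by
  have h1 : ∀ (w : V) (i j : Fin 5), ∑ k, c i j k * fam k w = 0 := by
    intro w
    apply extract2 fam hind
    intro u v
    rw [← h u v w]
    refine Finset.sum_congr rfl fun i _ => ?_
    refine Finset.sum_congr rfl fun j _ => ?_
    rw [Finset.sum_mul, Finset.sum_mul]
    refine Finset.sum_congr rfl fun k _ => ?_
    ring
  intro i j
  apply extract1 fam hind
  intro w
  exact h1 w i j

lemma hrep (b : Module.Basis (Fin 5) ℂ M) (lam : M) (u : V) :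
    lam u = ∑ i, b.repr lam i * b i u := by
  conv_lhs => rw [← b.sum_repr lam]
  simp only [ContinuousLinearMap.coe_sum', Finset.sum_apply, ContinuousLinearMap.smul_apply,
    smul_eq_mul]

lemma coordBilin (b : Module.Basis (Fin 5) ℂ M) (G : V →L[ℝ] M) :
    ∃ g : Fin 5 → Fin 5 → ℂ, ∀ u v, G u v = ∑ i, ∑ j, g i j * b i u * b j v := by
  have hL : ∀ i : Fin 5, ∃ L : M, ∀ v : V, L v = b.repr (G.flip v) i := by
    intro i
    refine ⟨LinearMap.toContinuousLinearMap
      { toFun := fun v => b.repr (G.flip v) i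
        map_add' := by intro v v'; show b.repr (G.flip (v+v')) i = _; rw [map_add, map_add]; rfl
        map_smul' := by
          intro r v
          show b.repr (G.flip (r • v)) i = r • b.repr (G.flip v) i
          rw [map_smul, show r • G.flip v = ((r:ℝ):ℂ) • G.flip v by
              ext u; simp [Complex.real_smul], map_smul]
          simp [Complex.real_smul] }, fun v => rfl⟩
  choose L hLs using hL
  refine ⟨fun i j => b.repr (L i) j, ?_⟩
  intro u v
  have h1 : G u v = ∑ i, b.repr (G.flip v) i * b i u := hrep b (G.flip v) u
  rw [h1]
  refine Finset.sum_congr rfl fun i _ => ?_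
  rw [← hLs i v, hrep b (L i) v, Finset.sum_mul]
  refine Finset.sum_congr rfl fun j _ => ?_
  ring

lemma top1 : ((⊤ : ℕ∞) : WithTop ℕ∞) ≠ 0 := by
  simp

lemma hasFDerivAt_app {F : Type*} [NormedAddCommGroup F] [NormedSpace ℝ F]
    (θ : V → V →L[ℝ] F) {x : V} (h : DifferentiableAt ℝ θ x) (a : V) :
    HasFDerivAt (fun y => θ y a) ((ContinuousLinearMap.apply ℝ F a).comp (fderiv ℝ θ x)) x :=
  (ContinuousLinearMap.apply ℝ F a).hasFDerivAt.comp x h.hasFDerivAt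

lemma fderiv_app {F : Type*} [NormedAddCommGroup F] [NormedSpace ℝ F]
    (θ : V → V →L[ℝ] F) {x : V} (h : DifferentiableAt ℝ θ x) (a u : V) :
    fderiv ℝ (fun y => θ y a) x u = fderiv ℝ θ x u a := by
  rw [(hasFDerivAt_app θ h a).fderiv]; rfl

lemma cyclicZero (U : Set V) (hU : IsOpen U) {x : V} (hx : x ∈ U) (θ : V → M)
    (hθ : ContDiffOn ℝ (⊤ : ℕ∞) θ U) (u v w : V) :
    fderiv ℝ (fun y => extD θ y v w) x u + fderiv ℝ (fun y => extD θ y w u) x v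
      + fderiv ℝ (fun y => extD θ y u v) x w = 0 := by
  have hxU : U ∈ nhds x := hU.mem_nhds hx
  have hgc : ∀ a : V, ContDiffAt ℝ ((⊤ : ℕ∞) : WithTop ℕ∞) (fun y => θ y a) x := fun a =>
    ((ContinuousLinearMap.apply ℝ ℂ a).contDiff.comp_contDiffOn hθ).contDiffAt hxU
  have hd2 : ∀ a : V, DifferentiableAt ℝ (fderiv ℝ (fun y => θ y a)) x := by
    intro a
    have h1 : ((1 : ℕ) : WithTop ℕ∞) + 1 ≤ ((⊤ : ℕ∞) : WithTop ℕ∞) := by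
      refine le_trans (le_of_eq ?_) ((WithTop.coe_le_coe).mpr (le_top : (2:ℕ∞) ≤ ⊤))
      norm_num
    exact ((hgc a).fderiv_right h1).differentiableAt (by simp)
  have hS : ∀ a p : V, fderiv ℝ (fun y => fderiv ℝ (fun z => θ z a) y p) x =
      (ContinuousLinearMap.apply ℝ ℂ p).comp (fderiv ℝ (fderiv ℝ (fun z => θ z a)) x) := by
    intro a p
    exact ((ContinuousLinearMap.apply ℝ ℂ p).hasFDerivAt.comp x (hd2 a).hasFDerivAt).fderiv
  have hdiff : ∀ a p : V, DifferentiableAt ℝ (fun y => fderiv ℝ (fun z => θ z a) y p) x := by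
    intro a p
    exact ((ContinuousLinearMap.apply ℝ ℂ p).differentiable.differentiableAt).comp x (hd2 a)
  have hsym : ∀ a p q : V, fderiv ℝ (fderiv ℝ (fun z => θ z a)) x p q =
      fderiv ℝ (fderiv ℝ (fun z => θ z a)) x q p := by
    intro a p q
    have h2 : minSmoothness ℝ 2 ≤ ((⊤ : ℕ∞) : WithTop ℕ∞) := by
      rw [minSmoothness_of_isRCLikeNormedField]; exact (WithTop.coe_le_coe).mpr (le_top : (2:ℕ∞) ≤ ⊤)
    exact (hgc a).isSymmSndFDerivAt h2 p q
  have hE : ∀ a b2 : V, fderiv ℝ (fun y => extD θ y a b2) x =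
      fderiv ℝ (fun y => fderiv ℝ (fun z => θ z b2) y a) x -
      fderiv ℝ (fun y => fderiv ℝ (fun z => θ z a) y b2) x := by
    intro a b2
    exact fderiv_sub (hdiff b2 a) (hdiff a b2)
  rw [hE v w, hE w u, hE u v]
  simp only [ContinuousLinearMap.sub_apply, hS, ContinuousLinearMap.comp_apply,
    ContinuousLinearMap.apply_apply]
  linear_combination (hsym w u v) + (hsym u v w) + (hsym v w u)

lemma deriv1 (U : Set V) (hU : IsOpen U) {x : V} (hx : x ∈ U)
    (θ1 θ2 : V → M) (ψ : V → V →L[ℝ] ℝ)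
    (hθ1 : ContDiffOn ℝ (⊤ : ℕ∞) θ1 U) (hθ2 : ContDiffOn ℝ (⊤ : ℕ∞) θ2 U)
    (hψ : ContDiffOn ℝ (⊤ : ℕ∞) ψ U)
    (heq1 : ∀ y ∈ U, ∀ v w, extD θ1 y v w =
      -Complex.I * (((ψ y v : ℝ) : ℂ) * θ1 y w - ((ψ y w : ℝ) : ℂ) * θ1 y v)
      + ((starRingEnd ℂ) (θ1 y v) * θ2 y w - (starRingEnd ℂ) (θ1 y w) * θ2 y v)) :
    ∀ v w u, fderiv ℝ (fun y => extD θ1 y v w) x u =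
      -Complex.I * (((fderiv ℝ ψ x u v : ℝ) : ℂ) * θ1 x w + ((ψ x v : ℝ) : ℂ) * fderiv ℝ θ1 x u w
        - ((fderiv ℝ ψ x u w : ℝ) : ℂ) * θ1 x v - ((ψ x w : ℝ) : ℂ) * fderiv ℝ θ1 x u v)
      + ((starRingEnd ℂ) (fderiv ℝ θ1 x u v) * θ2 x w
          + (starRingEnd ℂ) (θ1 x v) * fderiv ℝ θ2 x u w
          - (starRingEnd ℂ) (fderiv ℝ θ1 x u w) * θ2 x v
          - (starRingEnd ℂ) (θ1 x w) * fderiv ℝ θ2 x u v) := by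
  intro v w u
  have hxU : U ∈ nhds x := hU.mem_nhds hx
  have dθ1 : DifferentiableAt ℝ θ1 x := ((hθ1.contDiffAt hxU).differentiableAt top1)
  have dθ2 : DifferentiableAt ℝ θ2 x := ((hθ2.contDiffAt hxU).differentiableAt top1)
  have dψ : DifferentiableAt ℝ ψ x := ((hψ.contDiffAt hxU).differentiableAt top1)
  have hψa : ∀ a : V, HasFDerivAt (fun y => ((ψ y a : ℝ) : ℂ))
      (Complex.ofRealCLM.comp ((ContinuousLinearMap.apply ℝ ℝ a).comp (fderiv ℝ ψ x))) x :=
    fun a => Complex.ofRealCLM.hasFDerivAt.comp x (hasFDerivAt_app ψ dψ a)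
  have h1a : ∀ a : V, HasFDerivAt (fun y => θ1 y a)
      ((ContinuousLinearMap.apply ℝ ℂ a).comp (fderiv ℝ θ1 x)) x :=
    fun a => hasFDerivAt_app θ1 dθ1 a
  have h2a : ∀ a : V, HasFDerivAt (fun y => θ2 y a)
      ((ContinuousLinearMap.apply ℝ ℂ a).comp (fderiv ℝ θ2 x)) x :=
    fun a => hasFDerivAt_app θ2 dθ2 a
  have h1ca : ∀ a : V, HasFDerivAt (fun y => (starRingEnd ℂ) (θ1 y a))
      (Complex.conjCLE.toContinuousLinearMap.comp
        ((ContinuousLinearMap.apply ℝ ℂ a).comp (fderiv ℝ θ1 x))) x :=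
    fun a => Complex.conjCLE.toContinuousLinearMap.hasFDerivAt.comp x (h1a a)
  have hRHS := ((((hψa v).mul (h1a w)).sub ((hψa w).mul (h1a v))).const_mul
      (-Complex.I)).add
      (((h1ca v).mul (h2a w)).sub ((h1ca w).mul (h2a v)))
  have heeq : (fun y => extD θ1 y v w) =ᶠ[nhds x] (fun y =>
      -Complex.I * (((ψ y v : ℝ) : ℂ) * θ1 y w - ((ψ y w : ℝ) : ℂ) * θ1 y v)
      + ((starRingEnd ℂ) (θ1 y v) * θ2 y w - (starRingEnd ℂ) (θ1 y w) * θ2 y v)) :=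
    Filter.eventuallyEq_of_mem hxU (fun y hy => heq1 y hy v w)
  rw [heeq.fderiv_eq]; erw [hRHS.fderiv]
  simp only [ContinuousLinearMap.add_apply, ContinuousLinearMap.coe_smul', Pi.smul_apply,
    ContinuousLinearMap.sub_apply, ContinuousLinearMap.comp_apply,
    ContinuousLinearMap.apply_apply, Complex.ofRealCLM_apply, smul_eq_mul,
    ContinuousLinearEquiv.coe_coe]
  have hcc : ∀ z : ℂ, Complex.conjCLE z = (starRingEnd ℂ) z := fun z => rfl
  rw [hcc, hcc]
  ring

lemma deriv2 (U : Set V) (hU : IsOpen U) {x : V} (hx : x ∈ U)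
    (θ1 θ2 : V → M) (ψ : V → V →L[ℝ] ℝ) (T1 T2 : V → ℂ)
    (hθ1 : ContDiffOn ℝ (⊤ : ℕ∞) θ1 U) (hθ2 : ContDiffOn ℝ (⊤ : ℕ∞) θ2 U)
    (hψ : ContDiffOn ℝ (⊤ : ℕ∞) ψ U)
    (hT1 : ContDiffOn ℝ (⊤ : ℕ∞) T1 U) (hT2 : ContDiffOn ℝ (⊤ : ℕ∞) T2 U)
    (heq2 : ∀ y ∈ U, ∀ v w, extD θ2 y v w =
      -2 * Complex.I * (((ψ y v : ℝ) : ℂ) * θ2 y w - ((ψ y w : ℝ) : ℂ) * θ2 y v)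
      + T1 y * (θ1 y v * (starRingEnd ℂ) (θ1 y w) - θ1 y w * (starRingEnd ℂ) (θ1 y v))
      + T2 y * (θ1 y v * θ2 y w - θ1 y w * θ2 y v)) :
    ∀ v w u, fderiv ℝ (fun y => extD θ2 y v w) x u =
      -2 * Complex.I * (((fderiv ℝ ψ x u v : ℝ) : ℂ) * θ2 x w + ((ψ x v : ℝ) : ℂ) * fderiv ℝ θ2 x u w
        - ((fderiv ℝ ψ x u w : ℝ) : ℂ) * θ2 x v - ((ψ x w : ℝ) : ℂ) * fderiv ℝ θ2 x u v)
      + fderiv ℝ T1 x u * (θ1 x v * (starRingEnd ℂ) (θ1 x w) - θ1 x w * (starRingEnd ℂ) (θ1 x v))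
      + T1 x * (fderiv ℝ θ1 x u v * (starRingEnd ℂ) (θ1 x w)
          + θ1 x v * (starRingEnd ℂ) (fderiv ℝ θ1 x u w)
          - fderiv ℝ θ1 x u w * (starRingEnd ℂ) (θ1 x v)
          - θ1 x w * (starRingEnd ℂ) (fderiv ℝ θ1 x u v))
      + fderiv ℝ T2 x u * (θ1 x v * θ2 x w - θ1 x w * θ2 x v)
      + T2 x * (fderiv ℝ θ1 x u v * θ2 x w + θ1 x v * fderiv ℝ θ2 x u w
          - fderiv ℝ θ1 x u w * θ2 x v - θ1 x w * fderiv ℝ θ2 x u v) := by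
  intro v w u
  have hxU : U ∈ nhds x := hU.mem_nhds hx
  have dθ1 : DifferentiableAt ℝ θ1 x := ((hθ1.contDiffAt hxU).differentiableAt top1)
  have dθ2 : DifferentiableAt ℝ θ2 x := ((hθ2.contDiffAt hxU).differentiableAt top1)
  have dψ : DifferentiableAt ℝ ψ x := ((hψ.contDiffAt hxU).differentiableAt top1)
  have hT1d : HasFDerivAt T1 (fderiv ℝ T1 x) x :=
    ((hT1.contDiffAt hxU).differentiableAt top1).hasFDerivAt
  have hT2d : HasFDerivAt T2 (fderiv ℝ T2 x) x :=
    ((hT2.contDiffAt hxU).differentiableAt top1).hasFDerivAt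
  have hψa : ∀ a : V, HasFDerivAt (fun y => ((ψ y a : ℝ) : ℂ))
      (Complex.ofRealCLM.comp ((ContinuousLinearMap.apply ℝ ℝ a).comp (fderiv ℝ ψ x))) x :=
    fun a => Complex.ofRealCLM.hasFDerivAt.comp x (hasFDerivAt_app ψ dψ a)
  have h1a : ∀ a : V, HasFDerivAt (fun y => θ1 y a)
      ((ContinuousLinearMap.apply ℝ ℂ a).comp (fderiv ℝ θ1 x)) x :=
    fun a => hasFDerivAt_app θ1 dθ1 a
  have h2a : ∀ a : V, HasFDerivAt (fun y => θ2 y a)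
      ((ContinuousLinearMap.apply ℝ ℂ a).comp (fderiv ℝ θ2 x)) x :=
    fun a => hasFDerivAt_app θ2 dθ2 a
  have h1ca : ∀ a : V, HasFDerivAt (fun y => (starRingEnd ℂ) (θ1 y a))
      (Complex.conjCLE.toContinuousLinearMap.comp
        ((ContinuousLinearMap.apply ℝ ℂ a).comp (fderiv ℝ θ1 x))) x :=
    fun a => Complex.conjCLE.toContinuousLinearMap.hasFDerivAt.comp x (h1a a)
  have hRHS := (((((hψa v).mul (h2a w)).sub ((hψa w).mul (h2a v))).const_mul
      (-2 * Complex.I)).add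
      (hT1d.mul (((h1a v).mul (h1ca w)).sub ((h1a w).mul (h1ca v))))).add
      (hT2d.mul (((h1a v).mul (h2a w)).sub ((h1a w).mul (h2a v))))
  have heeq : (fun y => extD θ2 y v w) =ᶠ[nhds x] (fun y =>
      -2 * Complex.I * (((ψ y v : ℝ) : ℂ) * θ2 y w - ((ψ y w : ℝ) : ℂ) * θ2 y v)
      + T1 y * (θ1 y v * (starRingEnd ℂ) (θ1 y w) - θ1 y w * (starRingEnd ℂ) (θ1 y v))
      + T2 y * (θ1 y v * θ2 y w - θ1 y w * θ2 y v)) :=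
    Filter.eventuallyEq_of_mem hxU (fun y hy => heq2 y hy v w)
  rw [heeq.fderiv_eq]; erw [hRHS.fderiv]
  simp only [Pi.mul_apply, Pi.sub_apply, ContinuousLinearMap.add_apply, ContinuousLinearMap.coe_smul', Pi.smul_apply,
    ContinuousLinearMap.sub_apply, ContinuousLinearMap.comp_apply,
    ContinuousLinearMap.apply_apply, Complex.ofRealCLM_apply, smul_eq_mul,
    ContinuousLinearEquiv.coe_coe]
  have hcc : ∀ z : ℂ, Complex.conjCLE z = (starRingEnd ℂ) z := fun z => rfl
  rw [hcc, hcc]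
  ring

noncomputable def sg : Fin 5 → Fin 5 := ![2,3,0,1,4]

noncomputable def q1 (s d e : Fin 5 → Fin 5 → ℂ) : Fin 5 → Fin 5 → Fin 5 → ℂ := fun i j k =>
  (if k = 0 then -Complex.I * s i j else 0) + (if j = 4 then -Complex.I * d i k else 0)
  + (if j = 0 then Complex.I * s i k else 0) + (if k = 4 then Complex.I * d i j else 0)
  + (if k = 1 then (starRingEnd ℂ) (d (sg i) (sg j)) else 0) + (if j = 2 then e i k else 0)
  + (if j = 1 then -(starRingEnd ℂ) (d (sg i) (sg k)) else 0) + (if k = 2 then -e i j else 0)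

noncomputable def q2 (s d e : Fin 5 → Fin 5 → ℂ) (t r : Fin 5 → ℂ) (τ1 τ2 : ℂ) :
    Fin 5 → Fin 5 → Fin 5 → ℂ := fun i j k =>
  (if k = 1 then -2*Complex.I * s i j else 0) + (if j = 4 then -2*Complex.I * e i k else 0)
  + (if j = 1 then 2*Complex.I * s i k else 0) + (if k = 4 then 2*Complex.I * e i j else 0)
  + (if j = 0 ∧ k = 2 then t i else 0) + (if j = 2 ∧ k = 0 then -t i else 0)
  + (if k = 2 then τ1 * d i j else 0)
  + (if j = 0 then τ1 * (starRingEnd ℂ) (d (sg i) (sg k)) else 0)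
  + (if j = 2 then -(τ1 * d i k) else 0)
  + (if k = 0 then -(τ1 * (starRingEnd ℂ) (d (sg i) (sg j))) else 0)
  + (if j = 0 ∧ k = 1 then r i else 0) + (if j = 1 ∧ k = 0 then -r i else 0)
  + (if k = 1 then τ2 * d i j else 0) + (if j = 0 then τ2 * e i k else 0)
  + (if j = 1 then -(τ2 * d i k) else 0) + (if k = 0 then -(τ2 * e i j) else 0)

open Complex (I)

lemma key (U : Set V) (hU : IsOpen U) (θ1 θ2 : V → M) (ψ : V → V →L[ℝ] ℝ)
    (hθ1 : ContDiffOn ℝ (⊤ : ℕ∞) θ1 U) (hθ2 : ContDiffOn ℝ (⊤ : ℕ∞) θ2 U)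
    (hψ : ContDiffOn ℝ (⊤ : ℕ∞) ψ U) (T1 T2 : V → ℂ)
    (hT1 : ContDiffOn ℝ (⊤ : ℕ∞) T1 U) (hT2 : ContDiffOn ℝ (⊤ : ℕ∞) T2 U)
    (heq1 : ∀ y ∈ U, ∀ v w, extD θ1 y v w =
      -Complex.I * (((ψ y v : ℝ) : ℂ) * θ1 y w - ((ψ y w : ℝ) : ℂ) * θ1 y v)
      + ((starRingEnd ℂ) (θ1 y v) * θ2 y w - (starRingEnd ℂ) (θ1 y w) * θ2 y v))
    (heq2 : ∀ y ∈ U, ∀ v w, extD θ2 y v w =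
      -2 * Complex.I * (((ψ y v : ℝ) : ℂ) * θ2 y w - ((ψ y w : ℝ) : ℂ) * θ2 y v)
      + T1 y * (θ1 y v * (starRingEnd ℂ) (θ1 y w) - θ1 y w * (starRingEnd ℂ) (θ1 y v))
      + T2 y * (θ1 y v * θ2 y w - θ1 y w * θ2 y v))
    {x : V} (hx : x ∈ U)
    (hind : LinearIndependent ℂ ![θ1 x, θ2 x, conjForm (θ1 x), conjForm (θ2 x), realToC (ψ x)]) :
    (∃ c1 c2 c3 : ℂ, ∀ v, fderiv ℝ T1 x v + 2 * Complex.I * T1 x * ((ψ x v : ℝ) : ℂ)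
        = c1 * θ1 x v + c2 * (starRingEnd ℂ) (θ1 x v) + c3 * θ2 x v) ∧
    (∃ c1 c2 c3 : ℂ, ∀ v, fderiv ℝ T2 x v
        - 2 * (starRingEnd ℂ) (T2 x) * (starRingEnd ℂ) (θ2 x v)
        - Complex.I * T2 x * ((ψ x v : ℝ) : ℂ)
        = c1 * θ1 x v + c2 * (starRingEnd ℂ) (θ1 x v) + c3 * θ2 x v) := by
  have hxU : U ∈ nhds x := hU.mem_nhds hx
  have dθ1 : DifferentiableAt ℝ θ1 x := ((hθ1.contDiffAt hxU).differentiableAt top1)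
  have dθ2 : DifferentiableAt ℝ θ2 x := ((hθ2.contDiffAt hxU).differentiableAt top1)
  have dψ : DifferentiableAt ℝ ψ x := ((hψ.contDiffAt hxU).differentiableAt top1)
  set fam : Fin 5 → M := ![θ1 x, θ2 x, conjForm (θ1 x), conjForm (θ2 x), realToC (ψ x)] with hfam
  have card : Fintype.card (Fin 5) = Module.finrank ℂ M := by rw [finrankM]; simp
  let b : Module.Basis (Fin 5) ℂ M := basisOfLinearIndependentOfCardEqFinrank hind card
  have hb : ⇑b = fam := coe_basisOfLinearIndependentOfCardEqFinrank hind card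
  obtain ⟨d, hd0⟩ := coordBilin b (fderiv ℝ θ1 x)
  obtain ⟨e, he0⟩ := coordBilin b (fderiv ℝ θ2 x)
  obtain ⟨s, hs0⟩ := coordBilin b
    ((ContinuousLinearMap.compL ℝ V ℝ ℂ Complex.ofRealCLM).comp (fderiv ℝ ψ x))
  simp only [hb] at hd0 he0 hs0
  have hs' : ∀ u v, ((fderiv ℝ ψ x u v : ℝ) : ℂ) = ∑ i, ∑ j, s i j * fam i u * fam j v := by
    intro u v
    exact hs0 u v
  have htc : ∀ u, fderiv ℝ T1 x u = ∑ i, b.repr (fderiv ℝ T1 x) i * fam i u := by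
    intro u; rw [hrep b _ u, hb]
  have hrc : ∀ u, fderiv ℝ T2 x u = ∑ i, b.repr (fderiv ℝ T2 x) i * fam i u := by
    intro u; rw [hrep b _ u, hb]
  -- conjugate of basis covectors
  have hcf0 : ∀ a : V, (starRingEnd ℂ) (θ1 x a) = conjForm (θ1 x) a := fun a => rfl
  have hcf1 : ∀ a : V, (starRingEnd ℂ) (θ2 x a) = conjForm (θ2 x) a := fun a => rfl
  -- conjugated coordinate expansion of fderiv θ1
  have hdc' : ∀ u v, (starRingEnd ℂ) (fderiv ℝ θ1 x u v) =
      ∑ i, ∑ j, (starRingEnd ℂ) (d ((![2,3,0,1,4] : Fin 5 → Fin 5) i) ((![2,3,0,1,4] : Fin 5 → Fin 5) j)) * fam i u * fam j v := by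
    intro u v
    rw [hd0 u v]
    simp only [Fin.sum_univ_five, hfam, Matrix.cons_val_zero, Matrix.cons_val_one,
      Matrix.head_cons, Matrix.cons_val_two, Matrix.tail_cons, Matrix.cons_val_three,
      Matrix.cons_val_four, conjForm_apply, realToC_apply, map_add, map_mul,
      Complex.conj_conj, Complex.conj_ofReal]
    ring
  -- structure equation in coordinates : antisymmetrized coefficients of fderiv θ1
  have hext1 : ∀ u v, fderiv ℝ θ1 x u v - fderiv ℝ θ1 x v u = extD θ1 x u v := by
    intro u v
    show _ = fderiv ℝ (fun y => θ1 y v) x u - fderiv ℝ (fun y => θ1 y u) x v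
    rw [fderiv_app θ1 dθ1 v u, fderiv_app θ1 dθ1 u v]
  have hext2 : ∀ u v, fderiv ℝ θ2 x u v - fderiv ℝ θ2 x v u = extD θ2 x u v := by
    intro u v
    show _ = fderiv ℝ (fun y => θ2 y v) x u - fderiv ℝ (fun y => θ2 y u) x v
    rw [fderiv_app θ2 dθ2 v u, fderiv_app θ2 dθ2 u v]
  have hR1 : ∀ i j, d i j - d j i -
      (![![0,0,0,0,Complex.I],![0,0,-1,0,0],![0,1,0,0,0],![0,0,0,0,0],![-Complex.I,0,0,0,0]]
        : Fin 5 → Fin 5 → ℂ) i j = 0 := by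
    apply extract2 fam hind
    intro u v
    have h := heq1 x hx u v
    rw [← hext1 u v, hd0 u v, hd0 v u] at h
    simp only [Fin.sum_univ_five, hfam, Matrix.cons_val_zero, Matrix.cons_val_one,
      Matrix.head_cons, Matrix.cons_val_two, Matrix.tail_cons, Matrix.cons_val_three,
      Matrix.cons_val_four, conjForm_apply, realToC_apply] at h ⊢
    linear_combination h
  have hR2 : ∀ i j, e i j - e j i -
      (![![0, T2 x, T1 x, 0, 0], ![-T2 x, 0, 0, 0, 2*Complex.I], ![-T1 x, 0, 0, 0, 0],
         ![0,0,0,0,0], ![0, -2*Complex.I, 0, 0, 0]] : Fin 5 → Fin 5 → ℂ) i j = 0 := by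
    apply extract2 fam hind
    intro u v
    have h := heq2 x hx u v
    rw [← hext2 u v, he0 u v, he0 v u] at h
    simp only [Fin.sum_univ_five, hfam, Matrix.cons_val_zero, Matrix.cons_val_one,
      Matrix.head_cons, Matrix.cons_val_two, Matrix.tail_cons, Matrix.cons_val_three,
      Matrix.cons_val_four, conjForm_apply, realToC_apply] at h ⊢
    linear_combination h
  have hRS : ∀ i j, s i j - (starRingEnd ℂ)
      (s ((![2,3,0,1,4] : Fin 5 → Fin 5) i) ((![2,3,0,1,4] : Fin 5 → Fin 5) j)) = 0 := by
    apply extract2 fam hind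
    intro u v
    have h1 := hs' u v
    have h2 := congrArg (starRingEnd ℂ) h1
    simp only [Fin.sum_univ_five, hfam, Matrix.cons_val_zero, Matrix.cons_val_one,
      Matrix.head_cons, Matrix.cons_val_two, Matrix.tail_cons, Matrix.cons_val_three,
      Matrix.cons_val_four, conjForm_apply, realToC_apply, map_add, map_mul,
      Complex.conj_conj, Complex.conj_ofReal] at h1 h2 ⊢
    linear_combination h2 - h1
  have hD1 := deriv1 U hU hx θ1 θ2 ψ hθ1 hθ2 hψ heq1
  have hC1 : ∀ i j k, q1 s d e i j k + q1 s d e j k i + q1 s d e k i j = 0 := by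
    apply extract3 fam hind (fun i j k => q1 s d e i j k + q1 s d e j k i + q1 s d e k i j)
    intro u v w
    have h0 := cyclicZero U hU hx θ1 hθ1 u v w
    rw [hD1 v w u, hD1 w u v, hD1 u v w] at h0
    simp only [hdc'] at h0
    simp only [hd0, he0, hs'] at h0
    simp only [Fin.sum_univ_five, hfam, Matrix.cons_val_zero, Matrix.cons_val_one,
      Matrix.head_cons, Matrix.cons_val_two, Matrix.tail_cons, Matrix.cons_val_three,
      Matrix.cons_val_four, conjForm_apply, realToC_apply, q1, sg, Fin.reduceEq, reduceIte,
      and_true, true_and, and_false, false_and, and_self, if_true, if_false] at h0 ⊢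
    linear_combination h0
  have hD2 := deriv2 U hU hx θ1 θ2 ψ T1 T2 hθ1 hθ2 hψ hT1 hT2 heq2
  have hC2 : ∀ i j k,
      q2 s d e (fun i => b.repr (fderiv ℝ T1 x) i) (fun i => b.repr (fderiv ℝ T2 x) i)
        (T1 x) (T2 x) i j k
      + q2 s d e (fun i => b.repr (fderiv ℝ T1 x) i) (fun i => b.repr (fderiv ℝ T2 x) i)
        (T1 x) (T2 x) j k i
      + q2 s d e (fun i => b.repr (fderiv ℝ T1 x) i) (fun i => b.repr (fderiv ℝ T2 x) i)
        (T1 x) (T2 x) k i j = 0 := by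
    apply extract3 fam hind
    intro u v w
    have h0 := cyclicZero U hU hx θ2 hθ2 u v w
    rw [hD2 v w u, hD2 w u v, hD2 u v w] at h0
    simp only [hdc'] at h0
    simp only [hd0, he0, hs', htc, hrc] at h0
    simp only [Fin.sum_univ_five, hfam, Matrix.cons_val_zero, Matrix.cons_val_one,
      Matrix.head_cons, Matrix.cons_val_two, Matrix.tail_cons, Matrix.cons_val_three,
      Matrix.cons_val_four, conjForm_apply, realToC_apply, q2, sg, Fin.reduceEq, reduceIte,
      and_true, true_and, and_false, false_and, and_self, if_true, if_false] at h0 ⊢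
    linear_combination h0
  -- instantiate the needed coefficient identities
  have E1a := hC1 2 1 0
  have E1b := hC1 4 2 0
  have E2a := hC2 3 0 2
  have E2b := hC2 4 0 2
  have E2c := hC2 3 0 1
  have E2d := hC2 4 0 1
  simp only [q1, q2, sg, Matrix.cons_val_zero, Matrix.cons_val_one, Matrix.head_cons,
    Matrix.cons_val_two, Matrix.tail_cons, Matrix.cons_val_three, Matrix.cons_val_four,
    Fin.reduceEq, reduceIte, and_true, true_and, and_false, false_and, and_self, if_true,
    if_false, add_zero, zero_add, neg_zero] at E1a E1b E2a E2b E2c E2d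
  have R1a := hR1 3 0
  have R1b := hR1 1 0
  have R1c := hR1 4 0
  have R1d := hR1 1 3
  have R1e := hR1 2 0
  have R1f := hR1 4 3
  have R2a := hR2 3 2
  have R2b := hR2 4 2
  have R2c := hR2 0 2
  have R2d := hR2 0 1
  have R2e := hR2 3 1
  have R2f := hR2 4 1
  have R2h := hR2 4 0
  have S1 := hRS 0 3
  have S2 := hRS 3 0
  have S3 := hRS 4 0
  have S4 := hRS 0 4
  simp only [sg, Matrix.cons_val_zero, Matrix.cons_val_one, Matrix.head_cons,
    Matrix.cons_val_two, Matrix.tail_cons, Matrix.cons_val_three, Matrix.cons_val_four,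
    sub_zero] at R1a R1b R1c R1d R1e R1f R2a R2b R2c R2d R2e R2f R2h S1 S2 S3 S4
  -- conjugated relations
  have cj : ∀ z w : ℂ, z - w = 0 → (starRingEnd ℂ) z - (starRingEnd ℂ) w = 0 := by
    intro z w h
    rw [← map_sub, h, map_zero]
  have R1bc := cj _ _ R1b
  have R1cc : (starRingEnd ℂ) (d 4 0) - (starRingEnd ℂ) (d 0 4) - Complex.I = 0 := by
    have h := congrArg (starRingEnd ℂ) R1c
    simp only [map_add, map_sub, map_neg, map_zero, Complex.conj_I] at h
    linear_combination h
  have R1dc := cj _ _ R1d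
  have R1ec := cj _ _ R1e
  have R1fc := cj _ _ R1f
  have R2dc : (starRingEnd ℂ) (e 0 1) - (starRingEnd ℂ) (e 1 0)
      - (starRingEnd ℂ) (T2 x) = 0 := by
    have h := congrArg (starRingEnd ℂ) R2d
    simp only [map_sub, map_zero] at h
    linear_combination h
  have R2hc := cj _ _ R2h
  have E1ac := congrArg (starRingEnd ℂ) E1a
  have E1bc := congrArg (starRingEnd ℂ) E1b
  simp only [map_add, map_sub, map_mul, map_neg, map_zero, Complex.conj_conj,
    Complex.conj_I] at E1ac E1bc
  -- the four coefficient conclusions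
  have ht3 : b.repr (fderiv ℝ T1 x) 3 = 0 := by
    linear_combination E2a - T1 x * R1a - T1 x * R1bc - T2 x * R2a
  have ht4 : b.repr (fderiv ℝ T1 x) 4 + 2 * Complex.I * T1 x = 0 := by
    linear_combination E2b - T1 x * R1c - T1 x * R1cc - T2 x * R2b - 2 * Complex.I * R2c
  have hr3 : b.repr (fderiv ℝ T2 x) 3 - 2 * (starRingEnd ℂ) (T2 x) = 0 := by
    linear_combination E2c - 2 * Complex.I * S1 + 2 * Complex.I * S2 - 2 * E1ac
      + 2 * R2dc + 2 * R1e - T2 x * R1a - T1 x * R1dc - T2 x * R2e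
  have hr4 : b.repr (fderiv ℝ T2 x) 4 - Complex.I * T2 x = 0 := by
    linear_combination E2d + 2 * Complex.I * S3 - 2 * Complex.I * S4 + 2 * E1bc
      - 2 * R2hc + 2 * Complex.I * R1ec - T2 x * R1c - T1 x * R1fc - T2 x * R2f
      - 2 * Complex.I * R2d
  refine ⟨⟨b.repr (fderiv ℝ T1 x) 0, b.repr (fderiv ℝ T1 x) 2, b.repr (fderiv ℝ T1 x) 1, ?_⟩,
          ⟨b.repr (fderiv ℝ T2 x) 0, b.repr (fderiv ℝ T2 x) 2, b.repr (fderiv ℝ T2 x) 1, ?_⟩⟩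
  · intro v
    rw [htc v]
    simp only [Fin.sum_univ_five, hfam, Matrix.cons_val_zero, Matrix.cons_val_one,
      Matrix.head_cons, Matrix.cons_val_two, Matrix.tail_cons, Matrix.cons_val_three,
      Matrix.cons_val_four, conjForm_apply, realToC_apply]
    linear_combination ((starRingEnd ℂ) (θ2 x v)) * ht3 + (((ψ x v : ℝ) : ℂ)) * ht4
  · intro v
    rw [hrc v]
    simp only [Fin.sum_univ_five, hfam, Matrix.cons_val_zero, Matrix.cons_val_one,
      Matrix.head_cons, Matrix.cons_val_two, Matrix.tail_cons, Matrix.cons_val_three,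
      Matrix.cons_val_four, conjForm_apply, realToC_apply]
    linear_combination ((starRingEnd ℂ) (θ2 x v)) * hr3 + (((ψ x v : ℝ) : ℂ)) * hr4

lemma detzero (f1 f2 f3 : (Fin 5 → ℝ) → ℂ) (c1 c2 c3 : ℂ) (v : Fin 4 → (Fin 5 → ℝ)) :
    Matrix.det (Matrix.of fun (i : Fin 4) (j : Fin 4) =>
      ![fun u => c1 * f1 u + c2 * f2 u + c3 * f3 u, f1, f2, f3] i (v j)) = 0 := by
  rw [show (Matrix.of fun (i : Fin 4) (j : Fin 4) =>
      ![fun u => c1 * f1 u + c2 * f2 u + c3 * f3 u, f1, f2, f3] i (v j)) =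
    Matrix.of ![![c1 * f1 (v 0) + c2 * f2 (v 0) + c3 * f3 (v 0),
                  c1 * f1 (v 1) + c2 * f2 (v 1) + c3 * f3 (v 1),
                  c1 * f1 (v 2) + c2 * f2 (v 2) + c3 * f3 (v 2),
                  c1 * f1 (v 3) + c2 * f2 (v 3) + c3 * f3 (v 3)],
                ![f1 (v 0), f1 (v 1), f1 (v 2), f1 (v 3)],
                ![f2 (v 0), f2 (v 1), f2 (v 2), f2 (v 3)],
                ![f3 (v 0), f3 (v 1), f3 (v 2), f3 (v 3)]] from by
      ext i j
      fin_cases i <;> fin_cases j <;> rfl]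
  rw [Matrix.det_succ_row_zero]
  simp only [Fin.sum_univ_four, Matrix.det_fin_three, Matrix.submatrix_apply, Matrix.of_apply,
    Matrix.cons_val', Matrix.cons_val_zero, Matrix.cons_val_one, Matrix.head_cons,
    Matrix.cons_val_two, Matrix.tail_cons, Matrix.cons_val_three, Matrix.head_fin_const,
    Matrix.cons_val_fin_one, Matrix.empty_val', Fin.succAbove_zero, Fin.succ_zero_eq_one,
    Fin.succ_one_eq_two]
  norm_num [Fin.succAbove, Fin.succ, Fin.castSucc, Fin.castAdd, Fin.castLE, Fin.lt_def,
    show ((0:Fin 4):ℕ) = 0 from rfl, show ((1:Fin 4):ℕ) = 1 from rfl,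
    show ((2:Fin 4):ℕ) = 2 from rfl, show ((3:Fin 4):ℕ) = 3 from rfl]
  ring

end Stmt14Aux

/-- The Bianchi-type identities for the curvature functions `T₁, T₂`:
`(dT₁ + 2iT₁ψ) ∧ θ¹ ∧ θ̄¹ ∧ θ² = 0` and `(dT₂ − 2T̄₂θ̄² − iT₂ψ) ∧ θ¹ ∧ θ̄¹ ∧ θ² = 0`
(wedges of four 1-forms expressed as 4×4 determinants), equivalently these combinations
are pointwise ℂ-linear combinations of `θ¹, θ̄¹, θ²`. -/

theorem stmt14 (U : Set (Fin 5 → ℝ)) (hU : IsOpen U)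
    (θ1 θ2 : (Fin 5 → ℝ) → (Fin 5 → ℝ) →L[ℝ] ℂ)
    (ψ : (Fin 5 → ℝ) → (Fin 5 → ℝ) →L[ℝ] ℝ)
    (hθ1 : ContDiffOn ℝ (⊤ : ℕ∞) θ1 U) (hθ2 : ContDiffOn ℝ (⊤ : ℕ∞) θ2 U)
    (hψ : ContDiffOn ℝ (⊤ : ℕ∞) ψ U)
    (hindep : ∀ x ∈ U, LinearIndependent ℂ
      ![θ1 x, θ2 x, conjForm (θ1 x), conjForm (θ2 x), realToC (ψ x)])
    (T1 T2 : (Fin 5 → ℝ) → ℂ)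
    (hT1 : ContDiffOn ℝ (⊤ : ℕ∞) T1 U) (hT2 : ContDiffOn ℝ (⊤ : ℕ∞) T2 U)
    (heq1 : ∀ x ∈ U, ∀ v w, extD θ1 x v w =
      -Complex.I * (((ψ x v : ℝ) : ℂ) * θ1 x w - ((ψ x w : ℝ) : ℂ) * θ1 x v)
      + ((starRingEnd ℂ) (θ1 x v) * θ2 x w - (starRingEnd ℂ) (θ1 x w) * θ2 x v))
    (heq2 : ∀ x ∈ U, ∀ v w, extD θ2 x v w =
      -2 * Complex.I * (((ψ x v : ℝ) : ℂ) * θ2 x w - ((ψ x w : ℝ) : ℂ) * θ2 x v)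
      + T1 x * (θ1 x v * (starRingEnd ℂ) (θ1 x w) - θ1 x w * (starRingEnd ℂ) (θ1 x v))
      + T2 x * (θ1 x v * θ2 x w - θ1 x w * θ2 x v))
    (A B : (Fin 5 → ℝ) → (Fin 5 → ℝ) → ℂ)
    (hA : ∀ x v, A x v = fderiv ℝ T1 x v + 2 * Complex.I * T1 x * ((ψ x v : ℝ) : ℂ))
    (hB : ∀ x v, B x v = fderiv ℝ T2 x v
      - 2 * (starRingEnd ℂ) (T2 x) * (starRingEnd ℂ) (θ2 x v)
      - Complex.I * T2 x * ((ψ x v : ℝ) : ℂ)) :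
    (∀ x ∈ U, ∀ v1 v2 v3 v4 : Fin 5 → ℝ,
      Matrix.det (Matrix.of fun (i : Fin 4) (j : Fin 4) =>
        ![A x, fun v => θ1 x v, fun v => (starRingEnd ℂ) (θ1 x v), fun v => θ2 x v] i
          (![v1, v2, v3, v4] j)) = 0) ∧
    (∀ x ∈ U, ∀ v1 v2 v3 v4 : Fin 5 → ℝ,
      Matrix.det (Matrix.of fun (i : Fin 4) (j : Fin 4) =>
        ![B x, fun v => θ1 x v, fun v => (starRingEnd ℂ) (θ1 x v), fun v => θ2 x v] i
          (![v1, v2, v3, v4] j)) = 0) ∧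
    (∀ x ∈ U, ∃ c1 c2 c3 : ℂ, ∀ v,
      A x v = c1 * θ1 x v + c2 * (starRingEnd ℂ) (θ1 x v) + c3 * θ2 x v) ∧
    (∀ x ∈ U, ∃ c1 c2 c3 : ℂ, ∀ v,
      B x v = c1 * θ1 x v + c2 * (starRingEnd ℂ) (θ1 x v) + c3 * θ2 x v) := by
  have K := fun x (hx : x ∈ U) =>
    Stmt14Aux.key U hU θ1 θ2 ψ hθ1 hθ2 hψ T1 T2 hT1 hT2 heq1 heq2 hx (hindep x hx)
  refine ⟨?_, ?_, ?_, ?_⟩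
  · intro x hx v1 v2 v3 v4
    obtain ⟨c1, c2, c3, hc⟩ := (K x hx).1
    have hAx : A x = fun v => c1 * θ1 x v + c2 * (starRingEnd ℂ) (θ1 x v) + c3 * θ2 x v := by
      funext v
      rw [hA x v]
      exact hc v
    rw [hAx]
    exact Stmt14Aux.detzero (fun v => θ1 x v) (fun v => (starRingEnd ℂ) (θ1 x v))
      (fun v => θ2 x v) c1 c2 c3 ![v1, v2, v3, v4]
  · intro x hx v1 v2 v3 v4
    obtain ⟨c1, c2, c3, hc⟩ := (K x hx).2
    have hBx : B x = fun v => c1 * θ1 x v + c2 * (starRingEnd ℂ) (θ1 x v) + c3 * θ2 x v := by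
      funext v
      rw [hB x v]
      exact hc v
    rw [hBx]
    exact Stmt14Aux.detzero (fun v => θ1 x v) (fun v => (starRingEnd ℂ) (θ1 x v))
      (fun v => θ2 x v) c1 c2 c3 ![v1, v2, v3, v4]
  · intro x hx
    obtain ⟨c1, c2, c3, hc⟩ := (K x hx).1
    exact ⟨c1, c2, c3, fun v => by rw [hA x v]; exact hc v⟩
  · intro x hx
    obtain ⟨c1, c2, c3, hc⟩ := (K x hx).2
    exact ⟨c1, c2, c3, fun v => by rw [hB x v]; exact hc v⟩
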